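/- Let C be a cocomplete category and let T be a monad on C whose underlying endofunctor preserves coequalizers of reflexive pairs. Then the Eilenberg–Moore category Algebra(T) of T-algebras is cocomplete (has all small colimits). -/

import Mathlib

open CategoryTheory CategoryTheory.Limits

universe v u

section Aux

variable {C : Type u} [Category.{v} C] [HasColimits C] {T : Monad C}

/-- If `T` preserves reflexive coequalizers, the forgetful functor creates the coequalizer of
any reflexive pair of algebra morphisms. -/
noncomputable def auxCreates
    (hT : ∀ ⦃A B : C⦄ (f g : A ⟶ B), IsReflexivePair f g →
      PreservesColimit (parallelPair f g) (T : C ⥤ C))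
    {X Y : T.Algebra} (f g : X ⟶ Y) (hfg : IsReflexivePair f g) :
    CreatesColimit (parallelPair f g) (Monad.forget T) := by
  haveI := hfg
  let s := commonSection f g
  have hs1 : s ≫ f = 𝟙 Y := section_comp_left f g
  have hs2 : s ≫ g = 𝟙 Y := section_comp_right f g
  have hs1f : s.f ≫ f.f = 𝟙 Y.A := by
    rw [← Monad.Algebra.comp_f, hs1, Monad.Algebra.id_f]
  have hs2f : s.f ≫ g.f = 𝟙 Y.A := by
    rw [← Monad.Algebra.comp_f, hs2, Monad.Algebra.id_f]
  have r1 : IsReflexivePair f.f g.f := IsReflexivePair.mk' s.f hs1f hs2f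
  have r2 : IsReflexivePair ((T : C ⥤ C).map f.f) ((T : C ⥤ C).map g.f) :=
    IsReflexivePair.mk' ((T : C ⥤ C).map s.f)
      (by rw [← Functor.map_comp, hs1f]; exact (T : C ⥤ C).map_id _)
      (by rw [← Functor.map_comp, hs2f]; exact (T : C ⥤ C).map_id _)
  haveI p1 : PreservesColimit (parallelPair f.f g.f) (T : C ⥤ C) := hT _ _ r1
  haveI p2 : PreservesColimit (parallelPair ((T : C ⥤ C).map f.f) ((T : C ⥤ C).map g.f))
      (T : C ⥤ C) := hT _ _ r2
  haveI : PreservesColimit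
      (parallelPair ((parallelPair f g ⋙ Monad.forget T).map WalkingParallelPairHom.left)
        ((parallelPair f g ⋙ Monad.forget T).map WalkingParallelPairHom.right)) (T : C ⥤ C) := p1
  haveI : PreservesColimit
      (parallelPair
        (((parallelPair f g ⋙ Monad.forget T) ⋙ (T : C ⥤ C)).map WalkingParallelPairHom.left)
        (((parallelPair f g ⋙ Monad.forget T) ⋙ (T : C ⥤ C)).map WalkingParallelPairHom.right))
      (T : C ⥤ C) := p2
  haveI : PreservesColimit (parallelPair f g ⋙ Monad.forget T) (T : C ⥤ C) :=
    preservesColimit_of_iso_diagram (T : C ⥤ C)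
      (diagramIsoParallelPair (parallelPair f g ⋙ Monad.forget T)).symm
  haveI : PreservesColimit ((parallelPair f g ⋙ Monad.forget T) ⋙ (T : C ⥤ C)) (T : C ⥤ C) :=
    preservesColimit_of_iso_diagram (T : C ⥤ C)
      (diagramIsoParallelPair ((parallelPair f g ⋙ Monad.forget T) ⋙ (T : C ⥤ C))).symm
  infer_instance

lemma auxHasColimit
    (hT : ∀ ⦃A B : C⦄ (f g : A ⟶ B), IsReflexivePair f g →
      PreservesColimit (parallelPair f g) (T : C ⥤ C))
    {X Y : T.Algebra} (f g : X ⟶ Y) (hfg : IsReflexivePair f g) :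
    HasColimit (parallelPair f g) := by
  haveI := auxCreates hT f g hfg
  exact hasColimit_of_created (parallelPair f g) (Monad.forget T)

lemma auxHasReflexiveCoequalizers
    (hT : ∀ ⦃A B : C⦄ (f g : A ⟶ B), IsReflexivePair f g →
      PreservesColimit (parallelPair f g) (T : C ⥤ C)) :
    HasReflexiveCoequalizers T.Algebra :=
  ⟨fun _ _ f g hfg => auxHasColimit hT f g hfg⟩

end Aux

/-- Let `C` be a cocomplete category and let `T` be a monad on `C` whose underlying
endofunctor preserves coequalizers of reflexive pairs.  Then the Eilenberg–Moore category
of `T`-algebras is cocomplete. -/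
theorem monad_algebra_cocomplete
    {C : Type u} [Category.{v} C] [HasColimits C] (T : Monad C)
    (hT : ∀ ⦃A B : C⦄ (f g : A ⟶ B), IsReflexivePair f g →
      PreservesColimit (parallelPair f g) (T : C ⥤ C)) :
    HasColimits T.Algebra := by
  haveI hrc : HasReflexiveCoequalizers T.Algebra := auxHasReflexiveCoequalizers hT
  constructor
  intro J hJ
  rw [hasColimitsOfShape_iff_isRightAdjoint_const]
  let U : (J ⥤ T.Algebra) ⥤ (J ⥤ C) := (Functor.whiskeringRight J _ _).obj (Monad.forget T)
  let Fr : (J ⥤ C) ⥤ (J ⥤ T.Algebra) := (Functor.whiskeringRight J _ _).obj T.free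
  let adjW : Fr ⊣ U := T.adj.whiskerRight J
  -- pointwise colimits of reflexive pairs in the functor category
  have pointwise : ∀ {X Y : J ⥤ T.Algebra} (f g : X ⟶ Y), IsReflexivePair f g →
      ∀ j : J, HasColimit ((parallelPair f g).flip.obj j) := by
    intro X Y f g hfg j
    obtain ⟨s, hs1, hs2⟩ := hfg.common_section'
    have rj : IsReflexivePair (f.app j) (g.app j) :=
      IsReflexivePair.mk' (s.app j)
        (by rw [← NatTrans.comp_app, hs1]; rfl)
        (by rw [← NatTrans.comp_app, hs2]; rfl)
    haveI : HasColimit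
        (parallelPair (((parallelPair f g).flip.obj j).map WalkingParallelPairHom.left)
          (((parallelPair f g).flip.obj j).map WalkingParallelPairHom.right)) :=
      auxHasColimit hT (f.app j) (g.app j) rj
    exact hasColimit_of_iso (diagramIsoParallelPair ((parallelPair f g).flip.obj j))
  -- the functor category over the algebras has reflexive coequalizers
  haveI hrcJ : HasReflexiveCoequalizers (J ⥤ T.Algebra) := by
    constructor
    intro X Y f g hfg
    haveI := pointwise f g hfg
    infer_instance
  -- `U` reflects isomorphisms
  haveI : U.ReflectsIsomorphisms := by
    constructor
    intro X Y α h
    haveI : ∀ j : J, IsIso ((Monad.forget T).map (α.app j)) := fun j => by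
      have : IsIso ((U.map α).app j) := inferInstance
      exact this
    haveI : ∀ j : J, IsIso (α.app j) := fun j =>
      isIso_of_reflects_iso (α.app j) (Monad.forget T)
    exact NatIso.isIso_of_isIso_app α
  -- `U` preserves coequalizers of reflexive pairs
  haveI : Monad.PreservesColimitOfIsReflexivePair U := by
    constructor
    intro X Y f g hfg
    apply preservesColimit_of_evaluation
    intro j
    obtain ⟨s, hs1, hs2⟩ := hfg.common_section'
    have rj : IsReflexivePair (f.app j) (g.app j) :=
      IsReflexivePair.mk' (s.app j)
        (by rw [← NatTrans.comp_app, hs1]; rfl)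
        (by rw [← NatTrans.comp_app, hs2]; rfl)
    haveI := pointwise f g hfg
    haveI : CreatesColimit (parallelPair (f.app j) (g.app j)) (Monad.forget T) :=
      auxCreates hT _ _ rj
    haveI hp : PreservesColimit (parallelPair (f.app j) (g.app j)) (Monad.forget T) :=
      inferInstance
    haveI : PreservesColimit
        (parallelPair
          ((parallelPair f g ⋙ (evaluation J T.Algebra).obj j).map WalkingParallelPairHom.left)
          ((parallelPair f g ⋙ (evaluation J T.Algebra).obj j).map WalkingParallelPairHom.right))
        (Monad.forget T) := hp
    haveI : PreservesColimit (parallelPair f g ⋙ (evaluation J T.Algebra).obj j)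
        (Monad.forget T) :=
      preservesColimit_of_iso_diagram (Monad.forget T)
        (diagramIsoParallelPair (parallelPair f g ⋙ (evaluation J T.Algebra).obj j)).symm
    haveI : PreservesColimit (parallelPair f g)
        ((evaluation J T.Algebra).obj j ⋙ Monad.forget T) := inferInstance
    exact preservesColimit_of_natIso (parallelPair f g)
      (NatIso.ofComponents (fun X => Iso.refl _) (by intros; simp [U]; erw [Category.comp_id, Category.id_comp]) :
        (evaluation J T.Algebra).obj j ⋙ Monad.forget T ≅ U ⋙ (evaluation J C).obj j)
  haveI : MonadicRightAdjoint U :=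
    Monad.monadicOfHasPreservesReflexiveCoequalizersOfReflectsIsomorphisms adjW
  -- `const ⋙ U` is a right adjoint
  haveI : (Functor.const J ⋙ U : T.Algebra ⥤ (J ⥤ C)).IsRightAdjoint := by
    have e : (Monad.forget T ⋙ Functor.const J : T.Algebra ⥤ (J ⥤ C)) ≅
        Functor.const J ⋙ U :=
      NatIso.ofComponents (fun X => NatIso.ofComponents (fun j => Iso.refl _) (by aesop_cat))
        (by intros; ext; simp; rfl)
    haveI : (Monad.forget T ⋙ Functor.const J : T.Algebra ⥤ (J ⥤ C)).IsRightAdjoint :=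
      ((colimConstAdj (C := C) (J := J)).comp T.adj).isRightAdjoint
    exact ((Adjunction.ofIsRightAdjoint (Monad.forget T ⋙ Functor.const J)).ofNatIsoRight
      e).isRightAdjoint
  exact isRightAdjoint_triangle_lift_monadic U (R := Functor.const J)
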